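/- Let ω : {(s,t) : a ≤ s ≤ t ≤ b} → [0,∞) be a control (continuous, superadditive: ω(s,u) + ω(u,t) ≤ ω(s,t) for s ≤ u ≤ t, and ω(s,s) = 0), let p ≥ 1, and let f, g : Δ_{[a,b]} → F (F a normed space) satisfy ‖f_{s,t}‖ ≤ C₁ ω(s,t)^{θ₁} and ‖g_{s,t}‖ ≤ C₂ ω(s,t)^{θ₂} with θ₁ + θ₂ > 1. Then for any sequence of partitions P_n of [a,b] with mesh ω-size tending to 0, the Riemann-type sums Σ_{[u,v] ∈ P_n} f_{u,v} · g_{u,v} converge to 0; more precisely, |Σ_{[u,v] ∈ P} f_{u,v} g_{u,v}| ≤ C₁ C₂ (max_{[u,v]∈P} ω(u,v))^{θ₁+θ₂−1} · ω(a,b). -/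

import Mathlib

open Filter

/-- vanishing of off-diagonal Riemann-type sums: if
`‖f_{s,t}‖ ≤ C₁ ω(s,t)^{θ₁}` and `|g_{s,t}| ≤ C₂ ω(s,t)^{θ₂}` with
`θ₁ + θ₂ > 1` and `ω` a control, then for every partition of `[a,b]` with mesh
`ω`-size at most `M`, `‖Σ g·f‖ ≤ C₁ C₂ M^{θ₁+θ₂-1} ω(a,b)`, and the sums along
any sequence of partitions with mesh tending to `0` converge to `0`. -/
theorem stmt17 {F : Type*} [NormedAddCommGroup F] [NormedSpace ℝ F]
    (a b : ℝ) (hab : a ≤ b) (ω : ℝ → ℝ → ℝ)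
    (hω0 : ∀ s, ω s s = 0)
    (hωnn : ∀ s t, a ≤ s → s ≤ t → t ≤ b → 0 ≤ ω s t)
    (hωcont : ContinuousOn (fun p : ℝ × ℝ => ω p.1 p.2)
      {p : ℝ × ℝ | a ≤ p.1 ∧ p.1 ≤ p.2 ∧ p.2 ≤ b})
    (hωsup : ∀ s u t, a ≤ s → s ≤ u → u ≤ t → t ≤ b → ω s u + ω u t ≤ ω s t)
    (p : ℝ) (hp : 1 ≤ p)
    (f : ℝ → ℝ → F) (g : ℝ → ℝ → ℝ)
    (C₁ C₂ θ₁ θ₂ : ℝ) (hC₁ : 0 ≤ C₁) (hC₂ : 0 ≤ C₂)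
    (hθ₁ : 0 ≤ θ₁) (hθ₂ : 0 ≤ θ₂) (hθ : 1 < θ₁ + θ₂)
    (hf : ∀ s t, a ≤ s → s ≤ t → t ≤ b → ‖f s t‖ ≤ C₁ * ω s t ^ θ₁)
    (hg : ∀ s t, a ≤ s → s ≤ t → t ≤ b → |g s t| ≤ C₂ * ω s t ^ θ₂) :
    (∀ (n : ℕ) (t : ℕ → ℝ), t 0 = a → t n = b →
      (∀ k, k ≤ n → a ≤ t k ∧ t k ≤ b) →
      (∀ k, k < n → t k ≤ t (k + 1)) →
      ∀ M : ℝ, 0 ≤ M → (∀ k, k < n → ω (t k) (t (k + 1)) ≤ M) →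
        ‖∑ k ∈ Finset.range n, g (t k) (t (k + 1)) • f (t k) (t (k + 1))‖
          ≤ C₁ * C₂ * M ^ (θ₁ + θ₂ - 1) * ω a b) ∧
    (∀ (n : ℕ → ℕ) (t : ℕ → ℕ → ℝ) (mesh : ℕ → ℝ),
      (∀ j, t j 0 = a ∧ t j (n j) = b ∧
        (∀ k, k ≤ n j → a ≤ t j k ∧ t j k ≤ b) ∧
        (∀ k, k < n j → t j k ≤ t j (k + 1)) ∧
        0 ≤ mesh j ∧ (∀ k, k < n j → ω (t j k) (t j (k + 1)) ≤ mesh j)) →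
      Tendsto mesh atTop (nhds 0) →
      Tendsto (fun j => ∑ k ∈ Finset.range (n j),
          g (t j k) (t j (k + 1)) • f (t j k) (t j (k + 1)))
        atTop (nhds 0)) := by
  have hθ' : 0 ≤ θ₁ + θ₂ - 1 := by linarith
  have key : ∀ (n : ℕ) (t : ℕ → ℝ), t 0 = a → t n = b →
      (∀ k, k ≤ n → a ≤ t k ∧ t k ≤ b) →
      (∀ k, k < n → t k ≤ t (k + 1)) →
      ∀ M : ℝ, 0 ≤ M → (∀ k, k < n → ω (t k) (t (k + 1)) ≤ M) →
        ‖∑ k ∈ Finset.range n, g (t k) (t (k + 1)) • f (t k) (t (k + 1))‖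
          ≤ C₁ * C₂ * M ^ (θ₁ + θ₂ - 1) * ω a b := by
    intro n t h0 hn hmem hmono M hM hmesh
    -- sum of ω over the partition is at most ω a b
    have hsum : ∀ m, m ≤ n →
        ∑ k ∈ Finset.range m, ω (t k) (t (k + 1)) ≤ ω a (t m) := by
      intro m hm
      induction m with
      | zero => simp [h0, hω0]
      | succ m ih =>
        have hm' : m ≤ n := Nat.le_of_succ_le hm
        have hmn : m < n := hm
        rw [Finset.sum_range_succ]
        have h1 := ih hm'
        have h2 := hωsup a (t m) (t (m + 1)) le_rfl (hmem m hm').1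
          (hmono m hmn) (hmem (m + 1) hm).2
        linarith
    have hsum' : ∑ k ∈ Finset.range n, ω (t k) (t (k + 1)) ≤ ω a b := by
      have := hsum n le_rfl; rwa [hn] at this
    -- per-term bound
    have hterm : ∀ k ∈ Finset.range n,
        ‖g (t k) (t (k + 1)) • f (t k) (t (k + 1))‖
          ≤ C₁ * C₂ * M ^ (θ₁ + θ₂ - 1) * ω (t k) (t (k + 1)) := by
      intro k hk
      rw [Finset.mem_range] at hk
      have hak : a ≤ t k := (hmem k hk.le).1
      have hkk : t k ≤ t (k + 1) := hmono k hk
      have hkb : t (k + 1) ≤ b := (hmem (k + 1) hk).2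
      set ωk := ω (t k) (t (k + 1)) with hωk
      have hωknn : 0 ≤ ωk := hωnn _ _ hak hkk hkb
      have hfb := hf _ _ hak hkk hkb
      have hgb := hg _ _ hak hkk hkb
      have h1 : ‖g (t k) (t (k + 1)) • f (t k) (t (k + 1))‖
          ≤ (C₂ * ωk ^ θ₂) * (C₁ * ωk ^ θ₁) := by
        rw [norm_smul, Real.norm_eq_abs]
        exact mul_le_mul hgb hfb (norm_nonneg _)
          (mul_nonneg hC₂ (Real.rpow_nonneg hωknn _))
      have h2 : (C₂ * ωk ^ θ₂) * (C₁ * ωk ^ θ₁)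
          = C₁ * C₂ * ωk ^ (θ₁ + θ₂) := by
        rw [Real.rpow_add' hωknn (by linarith)]
        ring
      have h3 : ωk ^ (θ₁ + θ₂) ≤ M ^ (θ₁ + θ₂ - 1) * ωk := by
        have : ωk ^ (θ₁ + θ₂) = ωk ^ (θ₁ + θ₂ - 1) * ωk := by
          have he : θ₁ + θ₂ = (θ₁ + θ₂ - 1) + 1 := by ring
          conv_lhs => rw [he, Real.rpow_add' hωknn (by linarith), Real.rpow_one]
        rw [this]
        exact mul_le_mul_of_nonneg_right
          (Real.rpow_le_rpow hωknn (hmesh k hk) hθ') hωknn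
      calc ‖g (t k) (t (k + 1)) • f (t k) (t (k + 1))‖
          ≤ C₁ * C₂ * ωk ^ (θ₁ + θ₂) := h2 ▸ h1
        _ ≤ C₁ * C₂ * (M ^ (θ₁ + θ₂ - 1) * ωk) :=
            mul_le_mul_of_nonneg_left h3 (mul_nonneg hC₁ hC₂)
        _ = C₁ * C₂ * M ^ (θ₁ + θ₂ - 1) * ωk := by ring
    calc ‖∑ k ∈ Finset.range n, g (t k) (t (k + 1)) • f (t k) (t (k + 1))‖
        ≤ ∑ k ∈ Finset.range n, ‖g (t k) (t (k + 1)) • f (t k) (t (k + 1))‖ :=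
          norm_sum_le _ _
      _ ≤ ∑ k ∈ Finset.range n,
            C₁ * C₂ * M ^ (θ₁ + θ₂ - 1) * ω (t k) (t (k + 1)) :=
          Finset.sum_le_sum hterm
      _ = C₁ * C₂ * M ^ (θ₁ + θ₂ - 1)
            * ∑ k ∈ Finset.range n, ω (t k) (t (k + 1)) := by
          rw [Finset.mul_sum]
      _ ≤ C₁ * C₂ * M ^ (θ₁ + θ₂ - 1) * ω a b :=
          mul_le_mul_of_nonneg_left hsum'
            (mul_nonneg (mul_nonneg hC₁ hC₂) (Real.rpow_nonneg hM _))
  refine ⟨key, ?_⟩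
  intro n t mesh hpart hmesh
  have hbound : ∀ j, ‖∑ k ∈ Finset.range (n j),
      g (t j k) (t j (k + 1)) • f (t j k) (t j (k + 1))‖
      ≤ C₁ * C₂ * mesh j ^ (θ₁ + θ₂ - 1) * ω a b := by
    intro j
    obtain ⟨h0, hn, hmem, hmono, hm0, hmb⟩ := hpart j
    exact key (n j) (t j) h0 hn hmem hmono (mesh j) hm0 hmb
  have hpow : Tendsto (fun j => C₁ * C₂ * mesh j ^ (θ₁ + θ₂ - 1) * ω a b)
      atTop (nhds 0) := by
    have h1 : Tendsto (fun j => mesh j ^ (θ₁ + θ₂ - 1)) atTop (nhds 0) := by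
      have hc : ContinuousAt (fun x : ℝ => x ^ (θ₁ + θ₂ - 1)) 0 :=
        Real.continuousAt_rpow_const 0 _ (Or.inr (by linarith))
      have := hc.tendsto.comp hmesh
      simpa [Function.comp_def, Real.zero_rpow (by linarith : θ₁ + θ₂ - 1 ≠ 0)] using this
    have := (h1.const_mul (C₁ * C₂)).mul_const (ω a b)
    simpa using this
  exact squeeze_zero_norm hbound hpow
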